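/- For every positive integer n, r_n > (1/12)/(n + (1/30)/n), and moreover (1/12)/(n + (1/30)/n) > (1/12)/(n + n/(30n² - 1)), so this lower bound improves Nanjundiah's lower bound. -/
import Mathlib
open Filter Real Stirling Finset Topology

/-- Error term in Stirling's formula: `n! = √(2π) n^(n+1/2) e^(-n) e^(r_n)`. -/
noncomputable def stirlingErr (n : ℕ) : ℝ :=
  Real.log (n.factorial) - ((n : ℝ) + 1/2) * Real.log n + n - Real.log (Real.sqrt (2 * Real.pi))

lemma stirlingErr_eq (n : ℕ) (hn : 0 < n) :
    stirlingErr n = Real.log (stirlingSeq n) - Real.log (Real.sqrt Real.pi) := by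
  have hn' : (0:ℝ) < n := by exact_mod_cast hn
  rw [Stirling.log_stirlingSeq_formula, stirlingErr]
  rw [Real.log_mul two_ne_zero hn'.ne', Real.log_div hn'.ne' (Real.exp_ne_zero 1),
    Real.log_exp, Real.log_sqrt Real.pi_pos.le,
    Real.log_sqrt (by positivity), Real.log_mul two_ne_zero Real.pi_ne_zero]
  ring

lemma stirlingErr_tendsto : Tendsto stirlingErr atTop (𝓝 0) := by
  have h := Stirling.tendsto_stirlingSeq_sqrt_pi.log
    (ne_of_gt (Real.sqrt_pos.2 Real.pi_pos))
  have h2 : Tendsto (fun n => Real.log (stirlingSeq n) - Real.log (Real.sqrt Real.pi))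
      atTop (𝓝 0) := by
    simpa using h.sub (tendsto_const_nhds (x := Real.log (Real.sqrt Real.pi)))
  refine h2.congr' ?_
  filter_upwards [eventually_ge_atTop 1] with n hn
  exact (stirlingErr_eq n hn).symm

lemma step (m : ℕ) :
    stirlingErr (m + 1) - stirlingErr (m + 2) >
      (1/12) / ((m + 1 : ℝ) + (1/30) / (m + 1)) -
      (1/12) / ((m + 2 : ℝ) + (1/30) / (m + 2)) := by
  have hsum := Stirling.log_stirlingSeq_diff_hasSum m
  have hle := sum_le_hasSum (Finset.range 3)
    (fun k _ => by positivity) hsum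
  rw [stirlingErr_eq (m+1) (by omega), stirlingErr_eq (m+2) (by omega)]
  push_cast at hle ⊢
  have key : ∑ k ∈ Finset.range 3,
      (1 : ℝ) / (2 * ((k:ℝ) + 1) + 1) * ((1 / (2 * ((m:ℝ) + 1) + 1)) ^ 2) ^ (k + 1) >
      (1/12) / ((m + 1 : ℝ) + (1/30) / (m + 1)) -
      (1/12) / ((m + 2 : ℝ) + (1/30) / (m + 2)) := by
    have hm : (0:ℝ) ≤ m := Nat.cast_nonneg m
    rw [Finset.sum_range_succ, Finset.sum_range_succ, Finset.sum_range_one]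
    push_cast
    have h1 : (0:ℝ) < 2 * ((m:ℝ)+1) + 1 := by positivity
    have h2 : (0:ℝ) < (m:ℝ) + 1 + 1/30 / ((m:ℝ)+1) := by positivity
    have h3 : (0:ℝ) < (m:ℝ) + 2 + 1/30 / ((m:ℝ)+2) := by positivity
    rw [gt_iff_lt, ← sub_pos]
    have e1 : ((m:ℝ)+1) ≠ 0 := by positivity
    have e2 : ((m:ℝ)+2) ≠ 0 := by positivity
    field_simp
    ring_nf
    nlinarith [hm, pow_nonneg hm 2, pow_nonneg hm 3, pow_nonneg hm 4, pow_nonneg hm 5,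
      pow_nonneg hm 6, pow_nonneg hm 7, pow_nonneg hm 8, pow_nonneg hm 9,
      pow_nonneg hm 10, pow_nonneg hm 11, pow_nonneg hm 12]
  calc _ < _ := key
  _ ≤ _ := by
    have : Real.log (stirlingSeq (m + 1)) - Real.log √π - (Real.log (stirlingSeq (m + 2)) - Real.log √π)
        = Real.log (stirlingSeq (m + 1)) - Real.log (stirlingSeq (m + 2)) := by ring
    rw [this]; exact hle

noncomputable def aSeq (k : ℕ) : ℝ := (1/12) / ((k : ℝ) + (1/30) / k)

lemma step' (m : ℕ) (hm : 1 ≤ m) :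
    stirlingErr m - stirlingErr (m + 1) > aSeq m - aSeq (m + 1) := by
  obtain ⟨j, rfl⟩ := Nat.exists_eq_add_of_le hm
  have := step j
  simp only [aSeq]
  push_cast
  push_cast at this
  convert this using 3 <;> ring

lemma aSeq_tendsto : Tendsto aSeq atTop (𝓝 0) := by
  have h : Tendsto (fun k : ℕ => (k : ℝ) + (1/30) / k) atTop atTop :=
    tendsto_natCast_atTop_atTop.atTop_add (tendsto_const_div_atTop_nhds_zero_nat (1/30))
  have := (tendsto_const_nhds (x := (1/12 : ℝ))).div_atTop h
  exact this

lemma dSeq_nonneg (n : ℕ) (hn : 1 ≤ n) : 0 ≤ stirlingErr n - aSeq n := by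
  have hlim : Tendsto (fun k => stirlingErr k - aSeq k) atTop (𝓝 0) := by
    simpa using stirlingErr_tendsto.sub aSeq_tendsto
  have mono : ∀ k, stirlingErr (n + k) - aSeq (n + k) ≤ stirlingErr n - aSeq n := by
    intro k
    induction k with
    | zero => rfl
    | succ k ih =>
      have := step' (n + k) (by omega)
      have : stirlingErr (n + k + 1) - aSeq (n + k + 1) ≤
          stirlingErr (n + k) - aSeq (n + k) := by linarith
      calc stirlingErr (n + (k+1)) - aSeq (n + (k+1))
          = stirlingErr (n + k + 1) - aSeq (n + k + 1) := by ring_nf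
        _ ≤ stirlingErr (n + k) - aSeq (n + k) := this
        _ ≤ _ := ih
  refine le_of_tendsto hlim ?_
  filter_upwards [eventually_ge_atTop n] with m hm
  obtain ⟨k, rfl⟩ := Nat.exists_eq_add_of_le hm
  exact mono k

/-- `r_n > (1/12)/(n + (1/30)/n)`, a lower bound improving Nanjundiah's
`(1/12)/(n + n/(30n² - 1))`. -/
theorem stirlingErr_lower_bound_k3 (n : ℕ) (hn : 0 < n) :
    stirlingErr n > (1/12) / ((n : ℝ) + (1/30) / n) ∧
      (1/12) / ((n : ℝ) + (1/30) / n) >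
        (1/12) / ((n : ℝ) + (n : ℝ) / (30 * (n : ℝ)^2 - 1)) := by
  have hN : (1:ℝ) ≤ (n:ℝ) := by exact_mod_cast hn
  constructor
  · have h1 := step' n hn
    have h2 := dSeq_nonneg (n+1) (by omega)
    have : stirlingErr n - aSeq n > 0 := by linarith
    simpa [aSeq, gt_iff_lt, sub_pos] using this
  · have hd1 : (0:ℝ) < (n:ℝ) + (1/30) / n := by positivity
    refine div_lt_div_of_pos_left (by norm_num) hd1 ?_
    have h30 : (0:ℝ) < 30 * (n:ℝ)^2 - 1 := by nlinarith
    have : (1/30 : ℝ) / n < (n:ℝ) / (30 * (n:ℝ)^2 - 1) := by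
      rw [div_lt_div_iff₀ (by positivity) h30]
      nlinarith
    linarith
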